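/- For all integers k ≥ 2 and p1, p2 ≥ 1 with p1 + p2 = p ≥ 2, the tree B_{p1,p2,⌊k/2⌋+1} satisfies mdi_k(B_{p1,p2,⌊k/2⌋+1}) ≥ f_k(p·(⌊k/2⌋+1) + 2), with equality if and only if k is odd. -/

import Mathlib

/-- `J` is a distance-`k` independent set in `G`: any two distinct vertices of `J`
are at graph distance at least `k + 1`. -/
def DkIndep {V : Type*} (G : SimpleGraph V) (k : ℕ) (J : Set V) : Prop :=
  ∀ ⦃u⦄, u ∈ J → ∀ ⦃v⦄, v ∈ J → u ≠ v → k + 1 ≤ G.dist u v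

/-- `J` is a maximal distance-`k` independent set (`k`-MDIS) of `G`. -/
def MaxDkIndep {V : Type*} (G : SimpleGraph V) (k : ℕ) (J : Set V) : Prop :=
  DkIndep G k J ∧ ∀ J', DkIndep G k J' → J ⊆ J' → J' = J

/-- `mdi G k` is the number of maximal distance-`k` independent sets of `G`. -/
noncomputable def mdi {V : Type*} (G : SimpleGraph V) (k : ℕ) : ℕ :=
  {J : Set V | MaxDkIndep G k J}.ncard

/-- `f_k(n)` from the paper. -/
def fk (k n : ℕ) : ℕ :=
  if n ≤ k + 1 then n else n - (n - k % 2) / (k / 2 + 1) + 1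

/-- closed ball `N_k[x]`. -/
def ball {V : Type*} (G : SimpleGraph V) (k : ℕ) (x : V) : Set V :=
  {v | G.dist x v ≤ k}

/-- a leaf is a vertex of degree 1. -/
def IsLeaf {V : Type*} (G : SimpleGraph V) (v : V) : Prop :=
  (G.neighborSet v).ncard = 1

/-- eccentricity of a vertex. -/
noncomputable def ecc {V : Type*} [Fintype V] (G : SimpleGraph V) (v : V) : ℕ :=
  Finset.univ.sup (G.dist v)

/-- diameter of a finite graph. -/
noncomputable def gdiam {V : Type*} [Fintype V] (G : SimpleGraph V) : ℕ :=
  Finset.univ.sup (ecc G)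

/-- a central vertex is one of minimum eccentricity. -/
def IsCentral {V : Type*} [Fintype V] (G : SimpleGraph V) (v : V) : Prop :=
  ∀ u, ecc G v ≤ ecc G u

/-- a `k`-twin: some other vertex has the same closed `k`-ball. -/
def KTwin {V : Type*} (G : SimpleGraph V) (k : ℕ) (u : V) : Prop :=
  ∃ v, v ≠ u ∧ ball G k u = ball G k v

/-- a diametral leaf: a leaf whose eccentricity equals the diameter. -/
def IsDiametralLeaf {V : Type*} [Fintype V] (G : SimpleGraph V) (u : V) : Prop :=
  IsLeaf G u ∧ ecc G u = gdiam G

/-- a `k`-special pair. -/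
def KSpecial {V : Type*} [Fintype V] (G : SimpleGraph V) (k : ℕ) (x y : V) : Prop :=
  IsDiametralLeaf G x ∧ IsDiametralLeaf G y ∧ KTwin G k x ∧ KTwin G k y ∧
    ball G k x ≠ ball G k y

/-- `mdi*_k(G, ℓ)`. -/
noncomputable def mdiStar {V : Type*} (G : SimpleGraph V) (k : ℕ) (ℓ : V) : ℕ :=
  {J : Set V | MaxDkIndep G k J ∧ ℓ ∈ J ∧ ∃ w ∉ J, ball G k w ∩ J = {ℓ}}.ncard

/-- The spider tree `S_{p,m}`: a center (`none`) together with `p` legs of `m` vertices. -/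
def spider (p m : ℕ) : SimpleGraph (Option (Fin p × Fin m)) :=
  SimpleGraph.fromRel fun a b =>
    match a, b with
    | none, some (_, j) => (j : ℕ) = 0
    | some (i, j), some (i', j') => i = i' ∧ (j : ℕ) + 1 = (j' : ℕ)
    | _, _ => False

/-- `S'_{p,m}`: the spider `S_{p,m}` with one leaf at distance `m` from the center removed. -/
def spider' (p m : ℕ) (hp : 0 < p) (hm : 0 < m) :=
  (spider p m).induce
    {v | v ≠ some (⟨0, hp⟩, ⟨m - 1, Nat.sub_lt hm Nat.one_pos⟩)}

/-- The double spider `B_{p₁,p₂,s}`: two adjacent centers (`Sum.inl false`, `Sum.inl true`),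
with `p₁` legs of `s` vertices on the first and `p₂` legs of `s` vertices on the second. -/
def btree (p₁ p₂ s : ℕ) : SimpleGraph (Bool ⊕ ((Fin p₁ ⊕ Fin p₂) × Fin s)) :=
  SimpleGraph.fromRel fun a b =>
    match a, b with
    | Sum.inl x, Sum.inl y => x ≠ y
    | Sum.inl false, Sum.inr (Sum.inl _, j) => (j : ℕ) = 0
    | Sum.inl true, Sum.inr (Sum.inr _, j) => (j : ℕ) = 0
    | Sum.inr (c, j), Sum.inr (c', j') => c = c' ∧ (j : ℕ) + 1 = (j' : ℕ)
    | _, _ => False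

/-- `G` contains a subgraph isomorphic to `H`. -/
def ContainsSub {V W : Type*} (G : SimpleGraph V) (H : SimpleGraph W) : Prop :=
  ∃ f : W → V, Function.Injective f ∧ ∀ a b, H.Adj a b → G.Adj (f a) (f b)

/-- A pendant path on `s` vertices `P 0, …, P (s-1)` attached to `w`:
`P 0` is a leaf, consecutive vertices are adjacent, interior vertices have degree 2,
and `P (s-1)` is adjacent to `w`. -/
def IsPendantPath {V : Type*} (T : SimpleGraph V) (s : ℕ) (P : ℕ → V) (w : V) : Prop :=
  Set.InjOn P (Set.Iio s) ∧ (∀ i < s, P i ≠ w) ∧ IsLeaf T (P 0) ∧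
    (∀ i, i + 1 < s → T.Adj (P i) (P (i + 1))) ∧
    (∀ i, 0 < i → i < s → (T.neighborSet (P i)).ncard = 2) ∧
    T.Adj (P (s - 1)) w

/-- Isomorphism of simple graphs on `Fin n` as a setoid. -/
def graphSetoid (n : ℕ) : Setoid (SimpleGraph (Fin n)) where
  r G H := Nonempty (G ≃g H)
  iseqv := ⟨fun _ => ⟨SimpleGraph.Iso.refl⟩, fun ⟨e⟩ => ⟨e.symm⟩, fun ⟨e⟩ ⟨f⟩ => ⟨e.trans f⟩⟩

/-- The number of isomorphism classes of graphs in a set of graphs on `Fin n`. -/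
noncomputable def numIsoClasses {n : ℕ} (S : Set (SimpleGraph (Fin n))) : ℕ :=
  ((fun G => Quotient.mk (graphSetoid n) G) '' S).ncard

/-- Generic tool: a function satisfying these three properties is the graph distance. -/
lemma dist_eq_of {V : Type*} (G : SimpleGraph V) (D : V → V → ℕ)
    (h0 : ∀ u v, D u v = 0 ↔ u = v)
    (hstep : ∀ u v, u ≠ v → ∃ w, G.Adj u w ∧ D w v + 1 = D u v)
    (hlip : ∀ u w v, G.Adj u w → D u v ≤ D w v + 1) :
    ∀ u v, G.dist u v = D u v := by
  have walk : ∀ n u v, D u v = n → ∃ q : G.Walk u v, q.length = n := by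
    intro n
    induction n with
    | zero => intro u v h; rw [h0] at h; subst h; exact ⟨SimpleGraph.Walk.nil, rfl⟩
    | succ n ih =>
      intro u v h
      have hne : u ≠ v := by
        intro e; subst e; rw [(h0 u u).mpr rfl] at h; exact Nat.succ_ne_zero n h.symm
      obtain ⟨w, hadj, hD⟩ := hstep u v hne
      obtain ⟨q, hq⟩ := ih w v (by omega)
      exact ⟨SimpleGraph.Walk.cons hadj q, by simp [hq]⟩
  have low : ∀ u v, ∀ q : G.Walk u v, D u v ≤ q.length := by
    intro u v q
    induction q with
    | nil => simp [(h0 _ _).mpr rfl]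
    | @cons a b c hadj q ih =>
      have := hlip a b c hadj
      simpa using le_trans this (by omega)
  intro u v
  obtain ⟨q, hq⟩ := walk (D u v) u v rfl
  have hr : G.Reachable u v := ⟨q⟩
  obtain ⟨q', hq'⟩ := hr.exists_walk_length_eq_dist
  have h1 : G.dist u v ≤ D u v := hq ▸ SimpleGraph.dist_le q
  have h2 : D u v ≤ G.dist u v := hq' ▸ low u v q'
  omega

section BT
variable (p₁ p₂ s : ℕ)

/-- explicit distance function on the vertices of `btree`. -/
def D : (Bool ⊕ ((Fin p₁ ⊕ Fin p₂) × Fin s)) → (Bool ⊕ ((Fin p₁ ⊕ Fin p₂) × Fin s)) → ℕ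
  | Sum.inl a, Sum.inl b => if a = b then 0 else 1
  | Sum.inl a, Sum.inr (c, j) => (j : ℕ) + 1 + (if a = c.isRight then 0 else 1)
  | Sum.inr (c, j), Sum.inl a => (j : ℕ) + 1 + (if a = c.isRight then 0 else 1)
  | Sum.inr (c, j), Sum.inr (c', j') =>
      if c = c' then ((j : ℕ) - (j' : ℕ)) + ((j' : ℕ) - (j : ℕ))
      else (j : ℕ) + (j' : ℕ) + 2 + (if c.isRight = c'.isRight then 0 else 1)

variable {p₁ p₂ s}

lemma btree_adj_centers (a b : Bool) (h : a ≠ b) :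
    (btree p₁ p₂ s).Adj (Sum.inl a) (Sum.inl b) := by
  rw [btree, SimpleGraph.fromRel_adj]
  refine ⟨by simp [h], Or.inl ?_⟩
  cases a <;> cases b <;> simp_all

lemma btree_adj_center_leg (c : Fin p₁ ⊕ Fin p₂) (j : Fin s) (hj : (j : ℕ) = 0) :
    (btree p₁ p₂ s).Adj (Sum.inl c.isRight) (Sum.inr (c, j)) := by
  rw [btree, SimpleGraph.fromRel_adj]
  refine ⟨by simp, Or.inl ?_⟩
  rcases c with i | i <;> exact hj

lemma btree_adj_step (c : Fin p₁ ⊕ Fin p₂) (j j' : Fin s) (hj : (j : ℕ) + 1 = (j' : ℕ)) :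
    (btree p₁ p₂ s).Adj (Sum.inr (c, j)) (Sum.inr (c, j')) := by
  rw [btree, SimpleGraph.fromRel_adj]
  refine ⟨by simp [Prod.ext_iff]; intro h; omega, Or.inl ?_⟩
  rcases c with i | i <;> exact ⟨rfl, hj⟩

/-- destructing adjacency -/
lemma btree_adj_cases {u v : Bool ⊕ ((Fin p₁ ⊕ Fin p₂) × Fin s)}
    (h : (btree p₁ p₂ s).Adj u v) :
    (∃ a b, a ≠ b ∧ u = Sum.inl a ∧ v = Sum.inl b) ∨
    (∃ (c : Fin p₁ ⊕ Fin p₂) (j : Fin s), (j : ℕ) = 0 ∧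
      ((u = Sum.inl c.isRight ∧ v = Sum.inr (c, j)) ∨ (v = Sum.inl c.isRight ∧ u = Sum.inr (c, j)))) ∨
    (∃ (c : Fin p₁ ⊕ Fin p₂) (j j' : Fin s), (j : ℕ) + 1 = (j' : ℕ) ∧
      ((u = Sum.inr (c, j) ∧ v = Sum.inr (c, j')) ∨ (v = Sum.inr (c, j) ∧ u = Sum.inr (c, j')))) := by
  rw [btree, SimpleGraph.fromRel_adj] at h
  obtain ⟨hne, h⟩ := h
  rcases u with (_|_) | ⟨(i|i), j⟩ <;> rcases v with (_|_) | ⟨(i'|i'), j'⟩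
  · simp at hne
  · exact Or.inl ⟨false, true, by simp, rfl, rfl⟩
  · have h' : (j' : ℕ) = 0 ∨ False := h
    exact Or.inr (Or.inl ⟨Sum.inl i', j', h'.resolve_right not_false, Or.inl ⟨rfl, rfl⟩⟩)
  · have h' : False ∨ False := h
    exact (h'.resolve_right not_false).elim
  · exact Or.inl ⟨true, false, by simp, rfl, rfl⟩
  · simp at hne
  · have h' : False ∨ False := h
    exact (h'.resolve_right not_false).elim
  · have h' : (j' : ℕ) = 0 ∨ False := h
    exact Or.inr (Or.inl ⟨Sum.inr i', j', h'.resolve_right not_false, Or.inl ⟨rfl, rfl⟩⟩)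
  · have h' : False ∨ (j : ℕ) = 0 := h
    exact Or.inr (Or.inl ⟨Sum.inl i, j, h'.resolve_left not_false, Or.inr ⟨rfl, rfl⟩⟩)
  · have h' : False ∨ False := h
    exact (h'.resolve_right not_false).elim
  · have h' : (Sum.inl i = Sum.inl i' ∧ (j:ℕ)+1 = (j':ℕ)) ∨
        (Sum.inl i' = Sum.inl i ∧ (j':ℕ)+1 = (j:ℕ)) := h
    rcases h' with ⟨he, hj⟩ | ⟨he, hj⟩
    · obtain rfl : i = i' := by injection he
      exact Or.inr (Or.inr ⟨Sum.inl i, j, j', hj, Or.inl ⟨rfl, rfl⟩⟩)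
    · obtain rfl : i' = i := by injection he
      exact Or.inr (Or.inr ⟨Sum.inl i', j', j, hj, Or.inr ⟨rfl, rfl⟩⟩)
  · have h' : (Sum.inl i = Sum.inr i' ∧ (j:ℕ)+1 = (j':ℕ)) ∨
        (Sum.inr i' = Sum.inl i ∧ (j':ℕ)+1 = (j:ℕ)) := h
    rcases h' with ⟨he, _⟩ | ⟨he, _⟩ <;> exact absurd he (by simp)
  · have h' : False ∨ False := h
    exact (h'.resolve_right not_false).elim
  · have h' : False ∨ (j : ℕ) = 0 := h
    exact Or.inr (Or.inl ⟨Sum.inr i, j, h'.resolve_left not_false, Or.inr ⟨rfl, rfl⟩⟩)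
  · have h' : (Sum.inr i = Sum.inl i' ∧ (j:ℕ)+1 = (j':ℕ)) ∨
        (Sum.inl i' = Sum.inr i ∧ (j':ℕ)+1 = (j:ℕ)) := h
    rcases h' with ⟨he, _⟩ | ⟨he, _⟩ <;> exact absurd he (by simp)
  · have h' : (Sum.inr i = Sum.inr i' ∧ (j:ℕ)+1 = (j':ℕ)) ∨
        (Sum.inr i' = Sum.inr i ∧ (j':ℕ)+1 = (j:ℕ)) := h
    rcases h' with ⟨he, hj⟩ | ⟨he, hj⟩
    · obtain rfl : i = i' := by injection he
      exact Or.inr (Or.inr ⟨Sum.inr i, j, j', hj, Or.inl ⟨rfl, rfl⟩⟩)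
    · obtain rfl : i' = i := by injection he
      exact Or.inr (Or.inr ⟨Sum.inr i', j', j, hj, Or.inr ⟨rfl, rfl⟩⟩)

lemma D_zero (u v : Bool ⊕ ((Fin p₁ ⊕ Fin p₂) × Fin s)) : D p₁ p₂ s u v = 0 ↔ u = v := by
  rcases u with a | ⟨c, j⟩ <;> rcases v with b | ⟨c', j'⟩ <;>
    simp only [D] <;> split_ifs with h <;>
    simp_all [Prod.ext_iff, Fin.ext_iff] <;> omega

lemma D_step (u v : Bool ⊕ ((Fin p₁ ⊕ Fin p₂) × Fin s)) (hne : u ≠ v) :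
    ∃ w, (btree p₁ p₂ s).Adj u w ∧ D p₁ p₂ s w v + 1 = D p₁ p₂ s u v := by
  rcases u with a | ⟨c, j⟩ <;> rcases v with b | ⟨c', j'⟩
  · refine ⟨Sum.inl b, btree_adj_centers a b (by simpa using hne), ?_⟩
    have hab : a ≠ b := by simpa using hne
    simp [D, hab]
  · by_cases hac : a = c'.isRight
    · refine ⟨Sum.inr (c', ⟨0, j'.pos⟩), hac ▸ btree_adj_center_leg c' ⟨0, j'.pos⟩ rfl, ?_⟩
      simp [D, hac]
    · refine ⟨Sum.inl c'.isRight, btree_adj_centers a c'.isRight hac, ?_⟩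
      simp [D, hac]
  · by_cases hj : (j : ℕ) = 0
    · refine ⟨Sum.inl c.isRight, (btree_adj_center_leg c j hj).symm, ?_⟩
      by_cases hb : b = c.isRight
      · simp [D, hb, hj]
      · simp [D, hb, Ne.symm hb, hj]
    · refine ⟨Sum.inr (c, ⟨(j : ℕ) - 1, by omega⟩),
        (btree_adj_step c ⟨(j : ℕ) - 1, by omega⟩ j (by simp; omega)).symm, ?_⟩
      by_cases hb : b = c.isRight <;> simp [D, hb] <;> omega
  · by_cases hcc : c = c'
    · subst hcc
      have hjj : (j : ℕ) ≠ (j' : ℕ) := fun e => hne (by simp [Fin.ext_iff, e])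
      rcases Nat.lt_or_ge (j : ℕ) (j' : ℕ) with hlt | hge
      · refine ⟨Sum.inr (c, ⟨(j : ℕ) + 1, by omega⟩),
          btree_adj_step c j ⟨(j : ℕ) + 1, by omega⟩ (by simp), ?_⟩
        simp [D]; omega
      · refine ⟨Sum.inr (c, ⟨(j : ℕ) - 1, by omega⟩),
          (btree_adj_step c ⟨(j : ℕ) - 1, by omega⟩ j (by simp; omega)).symm, ?_⟩
        simp [D]; omega
    · by_cases hj : (j : ℕ) = 0
      · refine ⟨Sum.inl c.isRight, (btree_adj_center_leg c j hj).symm, ?_⟩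
        by_cases hrr : c.isRight = c'.isRight <;> simp [D, hcc, hrr, hj]
      · refine ⟨Sum.inr (c, ⟨(j : ℕ) - 1, by omega⟩),
          (btree_adj_step c ⟨(j : ℕ) - 1, by omega⟩ j (by simp; omega)).symm, ?_⟩
        by_cases hrr : c.isRight = c'.isRight <;> simp [D, hcc, hrr] <;> omega

set_option maxRecDepth 10000 in
lemma D_lip (u w v : Bool ⊕ ((Fin p₁ ⊕ Fin p₂) × Fin s)) (h : (btree p₁ p₂ s).Adj u w) :
    D p₁ p₂ s u v ≤ D p₁ p₂ s w v + 1 := by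
  rcases btree_adj_cases h with ⟨a, b, hab, rfl, rfl⟩ |
    ⟨c, j, hj, ⟨rfl, rfl⟩ | ⟨rfl, rfl⟩⟩ | ⟨c, j, j', hj, ⟨rfl, rfl⟩ | ⟨rfl, rfl⟩⟩ <;>
    rcases v with b' | ⟨c'', j''⟩
  · simp only [D]; split_ifs <;> simp_all [Fin.ext_iff] <;> omega
  · simp only [D]; split_ifs <;> simp_all [Fin.ext_iff] <;> omega
  · rcases c with i | i <;> rcases b' with _ | _ <;> simp [D, hj] <;> omega
  · simp only [D]; split_ifs <;> simp_all [Fin.ext_iff] <;> omega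
  · rcases c with i | i <;> rcases b' with _ | _ <;> simp [D, hj] <;> omega
  · simp only [D]; split_ifs <;> simp_all [Fin.ext_iff] <;> omega
  · simp only [D]; split_ifs <;> simp_all [Fin.ext_iff] <;> omega
  · simp only [D]
    by_cases hc : c = c''
    · subst hc; rw [if_pos rfl, if_pos rfl]; omega
    · simp only [if_neg hc]; split_ifs <;> omega
  · simp only [D]; split_ifs <;> simp_all [Fin.ext_iff] <;> omega
  · simp only [D]
    by_cases hc : c = c''
    · subst hc; rw [if_pos rfl, if_pos rfl]; omega
    · simp only [if_neg hc]; split_ifs <;> omega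

lemma btree_dist (u v : Bool ⊕ ((Fin p₁ ⊕ Fin p₂) × Fin s)) :
    (btree p₁ p₂ s).dist u v = D p₁ p₂ s u v :=
  dist_eq_of _ _ (D_zero) (D_step) (fun u w v h => D_lip u w v h) u v

end BT

lemma maxDkIndep_iff {V : Type*} (G : SimpleGraph V) (k : ℕ) (J : Set V) :
    MaxDkIndep G k J ↔ DkIndep G k J ∧ ∀ v, ∃ u ∈ J, G.dist u v ≤ k := by
  constructor
  · rintro ⟨hI, hM⟩
    refine ⟨hI, fun v => ?_⟩
    by_contra hc
    push_neg at hc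
    have hvJ : v ∉ J := fun hv => by have h2 := hc v hv; rw [SimpleGraph.dist_self] at h2; omega
    have hI' : DkIndep G k (insert v J) := by
      intro a ha b hb hab
      rcases ha with rfl | ha
      · rcases hb with rfl | hb
        · exact absurd rfl hab
        · have := hc b hb
          rw [G.dist_comm]
          omega
      · rcases hb with rfl | hb
        · have := hc a ha; omega
        · exact hI ha hb hab
    have := hM _ hI' (Set.subset_insert v J)
    exact hvJ (this ▸ Set.mem_insert v J)
  · rintro ⟨hI, hD⟩
    refine ⟨hI, fun J' hI' hsub => ?_⟩
    refine Set.Subset.antisymm (fun v hv => ?_) hsub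
    obtain ⟨u, huJ, hud⟩ := hD v
    rcases eq_or_ne u v with rfl | hne
    · exact huJ
    · exact absurd (hI' (hsub huJ) hv hne) (by omega)

section BT2
variable {p₁ p₂ s : ℕ}

lemma maxDkIndep_btree_iff (k : ℕ) (J : Set (Bool ⊕ ((Fin p₁ ⊕ Fin p₂) × Fin s))) :
    MaxDkIndep (btree p₁ p₂ s) k J ↔
      (∀ u ∈ J, ∀ v ∈ J, u ≠ v → k + 1 ≤ D p₁ p₂ s u v) ∧
      (∀ v, ∃ u ∈ J, D p₁ p₂ s u v ≤ k) := by
  rw [maxDkIndep_iff]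
  constructor
  · rintro ⟨hI, hD⟩
    refine ⟨fun u hu v hv huv => btree_dist u v ▸ hI hu hv huv, fun v => ?_⟩
    obtain ⟨u, hu, hd⟩ := hD v
    exact ⟨u, hu, btree_dist u v ▸ hd⟩
  · rintro ⟨hI, hD⟩
    refine ⟨fun u hu v hv huv => (btree_dist u v).symm ▸ hI u hu v hv huv, fun v => ?_⟩
    obtain ⟨u, hu, hd⟩ := hD v
    exact ⟨u, hu, (btree_dist u v).symm ▸ hd⟩

end BT2

section FAM
variable (p₁ p₂ s : ℕ)

def AllLeaves : Set (Bool ⊕ ((Fin p₁ ⊕ Fin p₂) × Fin s)) :=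
  {v | ∃ c j, v = Sum.inr (c, j) ∧ (j : ℕ) = s - 1}

def LeavesOn (b : Bool) : Set (Bool ⊕ ((Fin p₁ ⊕ Fin p₂) × Fin s)) :=
  {v | ∃ c j, v = Sum.inr (c, j) ∧ (j : ℕ) = s - 1 ∧ c.isRight = b}

def SpecialD (d : ℕ) (c₀ : Fin p₁ ⊕ Fin p₂) : Set (Bool ⊕ ((Fin p₁ ⊕ Fin p₂) × Fin s)) :=
  {v | ∃ j, v = Sum.inr (c₀, j) ∧ (j : ℕ) = d} ∪ LeavesOn p₁ p₂ s (!c₀.isRight)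

def CenterSet (b : Bool) : Set (Bool ⊕ ((Fin p₁ ⊕ Fin p₂) × Fin s)) :=
  {Sum.inl b} ∪ LeavesOn p₁ p₂ s (!b)

def SideSet₁ : Option (Fin p₁) → Set (Bool ⊕ ((Fin p₁ ⊕ Fin p₂) × Fin s))
  | none => LeavesOn p₁ p₂ s false
  | some i => {v | ∃ j, v = Sum.inr (Sum.inl i, j) ∧ (j : ℕ) = s - 2} ∪
      {v | ∃ i' j, i' ≠ i ∧ v = Sum.inr (Sum.inl i', j) ∧ (j : ℕ) = s - 1}

def SideSet₂ : Option (Fin p₂) → Set (Bool ⊕ ((Fin p₁ ⊕ Fin p₂) × Fin s))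
  | none => LeavesOn p₁ p₂ s true
  | some i => {v | ∃ j, v = Sum.inr (Sum.inr i, j) ∧ (j : ℕ) = s - 2} ∪
      {v | ∃ i' j, i' ≠ i ∧ v = Sum.inr (Sum.inr i', j) ∧ (j : ℕ) = s - 1}

def Cb (o₁ : Option (Fin p₁)) (o₂ : Option (Fin p₂)) :
    Set (Bool ⊕ ((Fin p₁ ⊕ Fin p₂) × Fin s)) :=
  SideSet₁ p₁ p₂ s o₁ ∪ SideSet₂ p₁ p₂ s o₂

variable {p₁ p₂ s : ℕ}

lemma isRight_ne {c c' : Fin p₁ ⊕ Fin p₂} (h : c.isRight ≠ c'.isRight) : c ≠ c' :=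
  fun e => h (e ▸ rfl)

lemma max_AllLeaves (k : ℕ) (hp₁ : 1 ≤ p₁) (hp₂ : 1 ≤ p₂) (hs : 1 ≤ s)
    (hk1 : s ≤ k) (hk2 : k + 1 ≤ 2 * s) :
    MaxDkIndep (btree p₁ p₂ s) k (AllLeaves p₁ p₂ s) := by
  rw [maxDkIndep_btree_iff]
  constructor
  · rintro u ⟨c, j, rfl, hj⟩ v ⟨c', j', rfl, hj'⟩ huv
    have hcc : c ≠ c' := by
      rintro rfl
      exact huv (by rw [Fin.ext_iff.mpr (hj.trans hj'.symm)])
    simp only [D, if_neg hcc]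
    split_ifs <;> omega
  · intro v
    rcases v with b | ⟨c, j⟩
    · rcases b with _ | _
      · exact ⟨Sum.inr (Sum.inl ⟨0, hp₁⟩, ⟨s - 1, by omega⟩),
          ⟨_, _, rfl, by simp⟩, by simp [D]; omega⟩
      · exact ⟨Sum.inr (Sum.inr ⟨0, hp₂⟩, ⟨s - 1, by omega⟩),
          ⟨_, _, rfl, by simp⟩, by simp [D]; omega⟩
    · refine ⟨Sum.inr (c, ⟨s - 1, by omega⟩), ⟨_, _, rfl, by simp⟩, ?_⟩
      have := j.isLt
      simp [D]; omega

end FAM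

section FAM2
variable {p₁ p₂ s : ℕ}

lemma max_SpecialD (k d : ℕ) (c₀ : Fin p₁ ⊕ Fin p₂) (hd : d + 2 ≤ s)
    (hk : k = d + s + 1) :
    MaxDkIndep (btree p₁ p₂ s) k (SpecialD p₁ p₂ s d c₀) := by
  rw [maxDkIndep_btree_iff]
  constructor
  · rintro u (⟨j, rfl, hj⟩ | ⟨c, j, rfl, hj, hc⟩) v
      (⟨j', rfl, hj'⟩ | ⟨c', j', rfl, hj', hc'⟩) huv
    · exact absurd (by rw [Fin.ext_iff.mpr (hj.trans hj'.symm)]) huv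
    · have hne : c₀ ≠ c' := by
        intro e; rw [← e] at hc'; simp at hc'; cases c₀ <;> simp at hc'
      have hri : ¬ c₀.isRight = c'.isRight := by
        intro e; rw [← e] at hc'; simp at hc'; cases c₀ <;> simp at hc'
      simp only [D, if_neg hne, if_neg hri]
      omega
    · have hne : c ≠ c₀ := by
        intro e; rw [e] at hc; simp at hc; cases c₀ <;> simp at hc
      have hri : ¬ c.isRight = c₀.isRight := by
        intro e; rw [e] at hc; simp at hc; cases c₀ <;> simp at hc
      simp only [D, if_neg hne, if_neg hri]
      omega
    · have hcc : c ≠ c' := by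
        rintro rfl
        exact huv (by rw [Fin.ext_iff.mpr (hj.trans hj'.symm)])
      simp only [D, if_neg hcc]
      split_ifs <;> omega
  · intro v
    rcases v with b | ⟨c, j⟩
    · refine ⟨Sum.inr (c₀, ⟨d, by omega⟩), Or.inl ⟨_, rfl, rfl⟩, ?_⟩
      simp only [D]
      split_ifs <;> omega
    · by_cases hcr : c.isRight = c₀.isRight
      · refine ⟨Sum.inr (c₀, ⟨d, by omega⟩), Or.inl ⟨_, rfl, rfl⟩, ?_⟩
        have := j.isLt
        rcases eq_or_ne c₀ c with rfl | hne
        · simp only [D]; split_ifs <;> first | omega | simp_all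
        · simp only [D, if_neg hne, if_pos (hcr.symm)]; omega
      · refine ⟨Sum.inr (c, ⟨s - 1, by omega⟩),
          Or.inr ⟨c, _, rfl, by simp, by cases hb : c.isRight <;> cases hb0 : c₀.isRight <;>
            simp_all⟩, ?_⟩
        have := j.isLt
        simp only [D]; split_ifs <;> first | omega | simp_all

lemma max_sing_leg (k : ℕ) (c : Fin p₁ ⊕ Fin p₂) (j : Fin s)
    (hk : (j : ℕ) + s + 2 ≤ k) :
    MaxDkIndep (btree p₁ p₂ s) k {Sum.inr (c, j)} := by
  rw [maxDkIndep_btree_iff]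
  refine ⟨by rintro u rfl v rfl huv; exact absurd rfl huv, fun v => ?_⟩
  refine ⟨Sum.inr (c, j), rfl, ?_⟩
  rcases v with b | ⟨c', j'⟩
  · simp only [D]; split_ifs <;> omega
  · have := j'.isLt
    rcases eq_or_ne c c' with rfl | hne
    · simp only [D]; split_ifs <;> first | omega | simp_all
    · simp only [D, if_neg hne]; split_ifs <;> omega

lemma max_sing_center (k : ℕ) (b : Bool) (hk : s + 1 ≤ k) :
    MaxDkIndep (btree p₁ p₂ s) k {Sum.inl b} := by
  rw [maxDkIndep_btree_iff]
  refine ⟨by rintro u rfl v rfl huv; exact absurd rfl huv, fun v => ?_⟩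
  refine ⟨Sum.inl b, rfl, ?_⟩
  rcases v with b' | ⟨c', j'⟩
  · simp only [D]; split_ifs <;> omega
  · have := j'.isLt
    simp only [D]; split_ifs <;> omega

lemma max_CenterSet (k : ℕ) (b : Bool) (hs : 1 ≤ s) (hk : k = s) :
    MaxDkIndep (btree p₁ p₂ s) k (CenterSet p₁ p₂ s b) := by
  rw [maxDkIndep_btree_iff]
  constructor
  · rintro u (rfl | ⟨c, j, rfl, hj, hc⟩) v (rfl | ⟨c', j', rfl, hj', hc'⟩) huv
    · exact absurd rfl huv
    · have : ¬ b = c'.isRight := by rw [hc']; cases b <;> simp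
      simp only [D, if_neg this]; omega
    · have : ¬ b = c.isRight := by rw [hc]; cases b <;> simp
      simp only [D, if_neg this]; omega
    · have hcc : c ≠ c' := by
        rintro rfl
        exact huv (by rw [Fin.ext_iff.mpr (hj.trans hj'.symm)])
      simp only [D, if_neg hcc]; split_ifs <;> omega
  · intro v
    rcases v with b' | ⟨c, j⟩
    · refine ⟨Sum.inl b, Or.inl rfl, ?_⟩
      simp only [D]; split_ifs <;> omega
    · by_cases hcr : c.isRight = b
      · refine ⟨Sum.inl b, Or.inl rfl, ?_⟩
        have := j.isLt
        simp only [D]; split_ifs <;> first | omega | simp_all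
      · by_cases hj : (j : ℕ) = s - 1
        · refine ⟨Sum.inr (c, j), Or.inr ⟨c, j, rfl, hj, by cases hb : c.isRight <;>
            cases b <;> simp_all⟩, ?_⟩
          simp only [D]; split_ifs <;> first | omega | simp_all
        · refine ⟨Sum.inl b, Or.inl rfl, ?_⟩
          have := j.isLt
          simp only [D]; split_ifs <;> first | omega | simp_all

lemma mem_SideSet₁ {o₁ : Option (Fin p₁)} {u : Bool ⊕ ((Fin p₁ ⊕ Fin p₂) × Fin s)} :
    u ∈ SideSet₁ p₁ p₂ s o₁ ↔ ∃ i j, u = Sum.inr (Sum.inl i, j) ∧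
      ((o₁ = some i ∧ (j : ℕ) = s - 2) ∨ (o₁ ≠ some i ∧ (j : ℕ) = s - 1)) := by
  rcases o₁ with _ | i₀
  · constructor
    · rintro ⟨c, j, rfl, hj, hc⟩
      rcases c with i | i
      · exact ⟨i, j, rfl, Or.inr ⟨by simp, hj⟩⟩
      · simp at hc
    · rintro ⟨i, j, rfl, (⟨h, _⟩ | ⟨_, hj⟩)⟩
      · simp at h
      · exact ⟨Sum.inl i, j, rfl, hj, rfl⟩
  · constructor
    · rintro (⟨j, rfl, hj⟩ | ⟨i', j, hi, rfl, hj⟩)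
      · exact ⟨i₀, j, rfl, Or.inl ⟨rfl, hj⟩⟩
      · exact ⟨i', j, rfl, Or.inr ⟨by simpa using hi.symm, hj⟩⟩
    · rintro ⟨i, j, rfl, (⟨h, hj⟩ | ⟨h, hj⟩)⟩
      · obtain rfl : i₀ = i := by simpa using h
        exact Or.inl ⟨j, rfl, hj⟩
      · exact Or.inr ⟨i, j, Ne.symm (by simpa using h), rfl, hj⟩

lemma mem_SideSet₂ {o₂ : Option (Fin p₂)} {u : Bool ⊕ ((Fin p₁ ⊕ Fin p₂) × Fin s)} :
    u ∈ SideSet₂ p₁ p₂ s o₂ ↔ ∃ i j, u = Sum.inr (Sum.inr i, j) ∧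
      ((o₂ = some i ∧ (j : ℕ) = s - 2) ∨ (o₂ ≠ some i ∧ (j : ℕ) = s - 1)) := by
  rcases o₂ with _ | i₀
  · constructor
    · rintro ⟨c, j, rfl, hj, hc⟩
      rcases c with i | i
      · simp at hc
      · exact ⟨i, j, rfl, Or.inr ⟨by simp, hj⟩⟩
    · rintro ⟨i, j, rfl, (⟨h, _⟩ | ⟨_, hj⟩)⟩
      · simp at h
      · exact ⟨Sum.inr i, j, rfl, hj, rfl⟩
  · constructor
    · rintro (⟨j, rfl, hj⟩ | ⟨i', j, hi, rfl, hj⟩)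
      · exact ⟨i₀, j, rfl, Or.inl ⟨rfl, hj⟩⟩
      · exact ⟨i', j, rfl, Or.inr ⟨by simpa using hi.symm, hj⟩⟩
    · rintro ⟨i, j, rfl, (⟨h, hj⟩ | ⟨h, hj⟩)⟩
      · obtain rfl : i₀ = i := by simpa using h
        exact Or.inl ⟨j, rfl, hj⟩
      · exact Or.inr ⟨i, j, Ne.symm (by simpa using h), rfl, hj⟩

lemma max_Cb (k : ℕ) (o₁ : Option (Fin p₁)) (o₂ : Option (Fin p₂))
    (hp₁ : 1 ≤ p₁) (hp₂ : 1 ≤ p₂) (hs : 2 ≤ s) (hk : k = 2 * s - 2) :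
    MaxDkIndep (btree p₁ p₂ s) k (Cb p₁ p₂ s o₁ o₂) := by
  rw [maxDkIndep_btree_iff]
  constructor
  · intro u hu v hv huv
    rcases hu with hu | hu <;> rcases hv with hv | hv
    · obtain ⟨i, j, rfl, hspec⟩ := mem_SideSet₁.mp hu
      obtain ⟨i', j', rfl, hspec'⟩ := mem_SideSet₁.mp hv
      rcases eq_or_ne i i' with rfl | hii
      · exfalso
        rcases hspec with ⟨h1, hj⟩ | ⟨h1, hj⟩ <;> rcases hspec' with ⟨h2, hj'⟩ | ⟨h2, hj'⟩ <;>
          first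
          | exact huv (by rw [Fin.ext_iff.mpr (hj.trans hj'.symm)])
          | exact h2 h1 | exact h1 h2
      · have hcc : (Sum.inl i : Fin p₁ ⊕ Fin p₂) ≠ Sum.inl i' := by simp [hii]
        simp only [D, if_neg hcc, Sum.isRight, if_pos rfl]
        rcases hspec with ⟨h1, hj⟩ | ⟨h1, hj⟩ <;> rcases hspec' with ⟨h2, hj'⟩ | ⟨h2, hj'⟩
        · exact absurd (h1.symm.trans h2) (by simpa using hii)
        all_goals omega
    · obtain ⟨i, j, rfl, hspec⟩ := mem_SideSet₁.mp hu
      obtain ⟨i', j', rfl, hspec'⟩ := mem_SideSet₂.mp hv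
      have hcc : (Sum.inl i : Fin p₁ ⊕ Fin p₂) ≠ Sum.inr i' := by simp
      simp only [D, if_neg hcc, Sum.isRight]
      rcases hspec with ⟨_, hj⟩ | ⟨_, hj⟩ <;> rcases hspec' with ⟨_, hj'⟩ | ⟨_, hj'⟩ <;>
        simp <;> omega
    · obtain ⟨i, j, rfl, hspec⟩ := mem_SideSet₂.mp hu
      obtain ⟨i', j', rfl, hspec'⟩ := mem_SideSet₁.mp hv
      have hcc : (Sum.inr i : Fin p₁ ⊕ Fin p₂) ≠ Sum.inl i' := by simp
      simp only [D, if_neg hcc, Sum.isRight]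
      rcases hspec with ⟨_, hj⟩ | ⟨_, hj⟩ <;> rcases hspec' with ⟨_, hj'⟩ | ⟨_, hj'⟩ <;>
        simp <;> omega
    · obtain ⟨i, j, rfl, hspec⟩ := mem_SideSet₂.mp hu
      obtain ⟨i', j', rfl, hspec'⟩ := mem_SideSet₂.mp hv
      rcases eq_or_ne i i' with rfl | hii
      · exfalso
        rcases hspec with ⟨h1, hj⟩ | ⟨h1, hj⟩ <;> rcases hspec' with ⟨h2, hj'⟩ | ⟨h2, hj'⟩ <;>
          first
          | exact huv (by rw [Fin.ext_iff.mpr (hj.trans hj'.symm)])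
          | exact h2 h1 | exact h1 h2
      · have hcc : (Sum.inr i : Fin p₁ ⊕ Fin p₂) ≠ Sum.inr i' := by simp [hii]
        simp only [D, if_neg hcc, Sum.isRight, if_pos rfl]
        rcases hspec with ⟨h1, hj⟩ | ⟨h1, hj⟩ <;> rcases hspec' with ⟨h2, hj'⟩ | ⟨h2, hj'⟩
        · exact absurd (h1.symm.trans h2) (by simpa using hii)
        all_goals omega
  · intro v
    rcases v with b | ⟨(i | i), j⟩
    · rcases b with _ | _
      · rcases o₁ with _ | i₀
        · refine ⟨Sum.inr (Sum.inl ⟨0, hp₁⟩, ⟨s - 1, by omega⟩),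
            Or.inl (mem_SideSet₁.mpr ⟨_, _, rfl, Or.inr ⟨by simp, rfl⟩⟩), ?_⟩
          simp [D]; omega
        · refine ⟨Sum.inr (Sum.inl i₀, ⟨s - 2, by omega⟩),
            Or.inl (mem_SideSet₁.mpr ⟨_, _, rfl, Or.inl ⟨rfl, rfl⟩⟩), ?_⟩
          simp [D]; omega
      · rcases o₂ with _ | i₀
        · refine ⟨Sum.inr (Sum.inr ⟨0, hp₂⟩, ⟨s - 1, by omega⟩),
            Or.inr (mem_SideSet₂.mpr ⟨_, _, rfl, Or.inr ⟨by simp, rfl⟩⟩), ?_⟩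
          simp [D]; omega
        · refine ⟨Sum.inr (Sum.inr i₀, ⟨s - 2, by omega⟩),
            Or.inr (mem_SideSet₂.mpr ⟨_, _, rfl, Or.inl ⟨rfl, rfl⟩⟩), ?_⟩
          simp [D]; omega
    · have := j.isLt
      by_cases hio : o₁ = some i
      · refine ⟨Sum.inr (Sum.inl i, ⟨s - 2, by omega⟩),
          Or.inl (mem_SideSet₁.mpr ⟨_, _, rfl, Or.inl ⟨hio, rfl⟩⟩), ?_⟩
        simp only [D]; split_ifs <;> first | omega | simp_all
      · refine ⟨Sum.inr (Sum.inl i, ⟨s - 1, by omega⟩),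
          Or.inl (mem_SideSet₁.mpr ⟨_, _, rfl, Or.inr ⟨hio, rfl⟩⟩), ?_⟩
        simp only [D]; split_ifs <;> first | omega | simp_all
    · have := j.isLt
      by_cases hio : o₂ = some i
      · refine ⟨Sum.inr (Sum.inr i, ⟨s - 2, by omega⟩),
          Or.inr (mem_SideSet₂.mpr ⟨_, _, rfl, Or.inl ⟨hio, rfl⟩⟩), ?_⟩
        simp only [D]; split_ifs <;> first | omega | simp_all
      · refine ⟨Sum.inr (Sum.inr i, ⟨s - 1, by omega⟩),
          Or.inr (mem_SideSet₂.mpr ⟨_, _, rfl, Or.inr ⟨hio, rfl⟩⟩), ?_⟩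
        simp only [D]; split_ifs <;> first | omega | simp_all

end FAM2

section CLASSIFY
variable {p₁ p₂ s : ℕ}

lemma bool_ne_eq_not : ∀ x y : Bool, ¬ x = y → x = !y := by decide

lemma odd_classify (k : ℕ) (hp₁ : 1 ≤ p₁) (hp₂ : 1 ≤ p₂) (hs : 2 ≤ s)
    (hk : k = 2 * s - 1) (J : Set (Bool ⊕ ((Fin p₁ ⊕ Fin p₂) × Fin s)))
    (hJ : MaxDkIndep (btree p₁ p₂ s) k J) :
    J = AllLeaves p₁ p₂ s ∨ (∃ c₀, J = SpecialD p₁ p₂ s (s - 2) c₀) ∨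
    (∃ (c : Fin p₁ ⊕ Fin p₂) (j : Fin s), (j : ℕ) + 3 ≤ s ∧ J = {Sum.inr (c, j)}) ∨
    (∃ b, J = {Sum.inl b}) := by
  rw [maxDkIndep_btree_iff] at hJ
  obtain ⟨hI, hD⟩ := hJ
  by_cases hcen : ∃ b, Sum.inl b ∈ J
  · obtain ⟨b, hb⟩ := hcen
    refine Or.inr (Or.inr (Or.inr ⟨b, ?_⟩))
    ext x
    refine ⟨fun hx => ?_, fun hx => hx ▸ hb⟩
    by_contra hne
    have hne' : (Sum.inl b : Bool ⊕ ((Fin p₁ ⊕ Fin p₂) × Fin s)) ≠ x := fun e => hne (by simp [← e])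
    have h1 := hI _ hb _ hx hne'
    have h2 : D p₁ p₂ s (Sum.inl b) x ≤ s + 1 := by
      rcases x with b' | ⟨c, j⟩
      · simp only [D]; split_ifs <;> omega
      · have := j.isLt
        simp only [D]; split_ifs <;> omega
    omega
  · push_neg at hcen
    by_cases hleaf : ∀ c (j : Fin s), Sum.inr (c, j) ∈ J → (j : ℕ) = s - 1
    · refine Or.inl ?_
      ext x
      constructor
      · intro hx
        rcases x with b | ⟨c, j⟩
        · exact absurd hx (hcen b)
        · exact ⟨c, j, rfl, hleaf c j hx⟩
      · rintro ⟨c, j, rfl, hj⟩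
        obtain ⟨u, hu, hud⟩ := hD (Sum.inr (c, j))
        rcases u with b | ⟨c', j'⟩
        · exact absurd hu (hcen b)
        · have hj' := hleaf c' j' hu
          rcases eq_or_ne c' c with rfl | hne
          · obtain rfl : j' = j := Fin.ext_iff.mpr (hj'.trans hj.symm)
            exact hu
          · exfalso
            simp only [D, if_neg hne] at hud
            split_ifs at hud <;> omega
    · push_neg at hleaf
      obtain ⟨c₀, j₀, hv₀, hj₀⟩ := hleaf
      have hj₀lt := j₀.isLt
      have key : ∀ c (j : Fin s), Sum.inr (c, j) ∈ J →
          (Sum.inr (c, j) : Bool ⊕ ((Fin p₁ ⊕ Fin p₂) × Fin s)) ≠ Sum.inr (c₀, j₀) →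
          ¬ c.isRight = c₀.isRight ∧ (j : ℕ) = s - 1 ∧ (j₀ : ℕ) = s - 2 := by
        intro c j hmem hne
        have h1 := hI _ hmem _ hv₀ hne
        have hjlt := j.isLt
        rcases eq_or_ne c c₀ with rfl | hcc
        · exfalso
          simp only [D, if_pos rfl] at h1
          split_ifs at h1 <;> omega
        · simp only [D, if_neg hcc] at h1
          split_ifs at h1 with hrr
          · omega
          · exact ⟨hrr, by omega, by omega⟩
      by_cases hsing : ∀ x ∈ J, x = Sum.inr (c₀, j₀)
      · refine Or.inr (Or.inr (Or.inl ⟨c₀, j₀, ?_, ?_⟩))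
        · -- depth bound from dominating the opposite leaf
          set c₁ : Fin p₁ ⊕ Fin p₂ :=
            if c₀.isRight then Sum.inl ⟨0, hp₁⟩ else Sum.inr ⟨0, hp₂⟩ with hc₁
          obtain ⟨u, hu, hud⟩ := hD (Sum.inr (c₁, ⟨s - 1, by omega⟩))
          rw [hsing u hu] at hud
          have hne : c₀ ≠ c₁ := by
            cases hb : c₀.isRight <;> simp [hc₁, hb] <;>
              exact fun e => by rw [e] at hb; simp at hb
          have hrr : ¬ c₀.isRight = c₁.isRight := by
            cases hb : c₀.isRight <;> simp [hc₁, hb]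
          simp only [D, if_neg hne, if_neg hrr] at hud
          omega
        · ext x
          refine ⟨fun hx => hsing x hx, fun hx => hx ▸ hv₀⟩
      · push_neg at hsing
        obtain ⟨u₁, hu₁, hu₁ne⟩ := hsing
        have hj₀val : (j₀ : ℕ) = s - 2 := by
          rcases u₁ with b | ⟨c₁, j₁⟩
          · exact absurd hu₁ (hcen b)
          · exact (key c₁ j₁ hu₁ hu₁ne).2.2
        refine Or.inr (Or.inl ⟨c₀, ?_⟩)
        ext x
        constructor
        · intro hx
          rcases x with b | ⟨c, j⟩
          · exact absurd hx (hcen b)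
          · rcases eq_or_ne (Sum.inr (c, j) : Bool ⊕ ((Fin p₁ ⊕ Fin p₂) × Fin s))
              (Sum.inr (c₀, j₀)) with he | hne
            · rw [he]
              exact Or.inl ⟨j₀, rfl, hj₀val⟩
            · obtain ⟨hrr, hj, _⟩ := key c j hx hne
              exact Or.inr ⟨c, j, rfl, hj, bool_ne_eq_not _ _ hrr⟩
        · rintro (⟨j, rfl, hj⟩ | ⟨c, j, rfl, hj, hcr⟩)
          · obtain rfl : j = j₀ := Fin.ext_iff.mpr (hj.trans hj₀val.symm)
            exact hv₀
          · obtain ⟨u, hu, hud⟩ := hD (Sum.inr (c, j))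
            have hccr : ¬ c.isRight = c₀.isRight := by
              rw [hcr]; cases c₀.isRight <;> simp
            rcases u with b | ⟨c', j'⟩
            · exact absurd hu (hcen b)
            · rcases eq_or_ne (Sum.inr (c', j') : Bool ⊕ ((Fin p₁ ⊕ Fin p₂) × Fin s))
                (Sum.inr (c₀, j₀)) with he | hne
              · exfalso
                rw [he] at hud
                have hne2 : c₀ ≠ c := fun e => hccr (by rw [e])
                have hrr2 : ¬ c₀.isRight = c.isRight := fun e => hccr e.symm
                simp only [D, if_neg hne2, if_neg hrr2] at hud
                omega
              · obtain ⟨hrr', hj', _⟩ := key c' j' hu hne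
                rcases eq_or_ne c' c with rfl | hcc
                · obtain rfl : j' = j := Fin.ext_iff.mpr (hj'.trans hj.symm)
                  exact hu
                · exfalso
                  simp only [D, if_neg hcc] at hud
                  split_ifs at hud <;> omega
      done

end CLASSIFY

section COUNT
variable (p₁ p₂ s : ℕ)

def OddF : (Unit ⊕ (Fin p₁ ⊕ Fin p₂) ⊕ ((Fin p₁ ⊕ Fin p₂) × Fin (s - 2)) ⊕ Bool) →
    Set (Bool ⊕ ((Fin p₁ ⊕ Fin p₂) × Fin s))
  | Sum.inl _ => AllLeaves p₁ p₂ s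
  | Sum.inr (Sum.inl c) => SpecialD p₁ p₂ s (s - 2) c
  | Sum.inr (Sum.inr (Sum.inl (c, j))) => {Sum.inr (c, Fin.castLE (Nat.sub_le s 2) j)}
  | Sum.inr (Sum.inr (Sum.inr b)) => {Sum.inl b}

variable {p₁ p₂ s : ℕ}

lemma oddF_inj (hp₁ : 1 ≤ p₁) (hp₂ : 1 ≤ p₂) (hs : 2 ≤ s) :
    Function.Injective (OddF p₁ p₂ s) := by
  have hsl : s - 2 < s := by omega
  have hmemA : ∀ (c : Fin p₁ ⊕ Fin p₂),
      (Sum.inr (c, ⟨s - 2, hsl⟩) : Bool ⊕ ((Fin p₁ ⊕ Fin p₂) × Fin s)) ∈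
        SpecialD p₁ p₂ s (s - 2) c := fun c => Or.inl ⟨_, rfl, rfl⟩
  have hL : ∀ (c : Fin p₁ ⊕ Fin p₂),
      (Sum.inr (c, ⟨s - 1, by omega⟩) : Bool ⊕ ((Fin p₁ ⊕ Fin p₂) × Fin s)) ∈
        AllLeaves p₁ p₂ s := fun c => ⟨c, _, rfl, rfl⟩
  intro a b h
  rcases a with _ | (c | (⟨c, j⟩ | bb)) <;> rcases b with _ | (c' | (⟨c', j'⟩ | bb')) <;>
    simp only [OddF] at h
  · rfl
  · exfalso
    have := h ▸ hmemA c'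
    obtain ⟨c₂, j₂, he, hj₂⟩ := this
    obtain ⟨-, he2⟩ : c' = c₂ ∧ (⟨s - 2, hsl⟩ : Fin s) = j₂ := by simpa using he
    rw [← he2] at hj₂
    simp at hj₂; omega
  · exfalso
    have h1 := h ▸ hL (Sum.inl ⟨0, hp₁⟩)
    have h2 := h ▸ hL (Sum.inr ⟨0, hp₂⟩)
    rw [Set.mem_singleton_iff] at h1 h2
    rw [← h2] at h1
    simp at h1
  · exfalso
    have h1 := h ▸ hL (Sum.inl ⟨0, hp₁⟩)
    rw [Set.mem_singleton_iff] at h1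
    simp at h1
  · exfalso
    have := h.symm ▸ hmemA c
    obtain ⟨c₂, j₂, he, hj₂⟩ := this
    obtain ⟨-, he2⟩ : c = c₂ ∧ (⟨s - 2, hsl⟩ : Fin s) = j₂ := by simpa using he
    rw [← he2] at hj₂
    simp at hj₂; omega
  · have := h ▸ hmemA c
    rcases this with ⟨j₂, he, hj₂⟩ | ⟨c₂, j₂, he, hj₂, -⟩
    · obtain ⟨rfl, -⟩ : c = c' ∧ ((⟨s - 2, hsl⟩ : Fin s) : Fin s) = j₂ := by simpa using he
      rfl
    · exfalso
      obtain ⟨-, he2⟩ : c₂ = c ∧ j₂ = (⟨s - 2, hsl⟩ : Fin s) := by simpa using he.symm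
      rw [he2] at hj₂
      simp at hj₂; omega
  · exfalso
    have h1 := h ▸ hmemA c
    rw [Set.mem_singleton_iff] at h1
    obtain ⟨-, he2⟩ : c = c' ∧ (⟨s - 2, hsl⟩ : Fin s) = Fin.castLE (Nat.sub_le s 2) j' := by simpa using h1
    have := j'.isLt
    have : (s : ℕ) - 2 = (j' : ℕ) := by
      have := congrArg Fin.val he2; simpa using this
    omega
  · exfalso
    have h1 := h ▸ hmemA c
    rw [Set.mem_singleton_iff] at h1
    simp at h1
  · exfalso
    have h1 := h.symm ▸ hL (Sum.inl ⟨0, hp₁⟩)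
    have h2 := h.symm ▸ hL (Sum.inr ⟨0, hp₂⟩)
    rw [Set.mem_singleton_iff] at h1 h2
    rw [← h2] at h1
    simp at h1
  · exfalso
    have h1 := h.symm ▸ hmemA c'
    rw [Set.mem_singleton_iff] at h1
    obtain ⟨-, he2⟩ : c' = c ∧ (⟨s - 2, hsl⟩ : Fin s) = Fin.castLE (Nat.sub_le s 2) j := by simpa using h1
    have := j.isLt
    have : (s : ℕ) - 2 = (j : ℕ) := by
      have := congrArg Fin.val he2; simpa using this
    omega
  · have h1 : (Sum.inr (c, Fin.castLE (Nat.sub_le s 2) j) :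
        Bool ⊕ ((Fin p₁ ⊕ Fin p₂) × Fin s)) = Sum.inr (c', Fin.castLE (Nat.sub_le s 2) j') :=
      Set.singleton_eq_singleton_iff.mp h
    obtain ⟨rfl, he2⟩ : c = c' ∧ Fin.castLE (Nat.sub_le s 2) j = Fin.castLE (Nat.sub_le s 2) j' := by simpa using h1
    obtain rfl : j = j' := by
      have := congrArg Fin.val he2
      exact Fin.ext (by simpa using this)
    rfl
  · exact absurd (Set.singleton_eq_singleton_iff.mp h) (by simp)
  · exfalso
    have h1 := h ▸ hL (Sum.inl ⟨0, hp₁⟩)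
    rw [Set.mem_singleton_iff] at h1
    simp at h1
  · exfalso
    have h1 := h ▸ hmemA c'
    rw [Set.mem_singleton_iff] at h1
    simp at h1
  · exact absurd (Set.singleton_eq_singleton_iff.mp h) (by simp)
  · obtain rfl : bb = bb' := by simpa using Set.singleton_eq_singleton_iff.mp h
    rfl

end COUNT

section OCOUNT
variable {p₁ p₂ s : ℕ}

lemma odd_range (k : ℕ) (hp₁ : 1 ≤ p₁) (hp₂ : 1 ≤ p₂) (hs : 2 ≤ s) (hk : k = 2 * s - 1) :
    {J | MaxDkIndep (btree p₁ p₂ s) k J} = Set.range (OddF p₁ p₂ s) := by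
  ext J
  constructor
  · intro hJ
    rcases odd_classify k hp₁ hp₂ hs hk J hJ with rfl | ⟨c₀, rfl⟩ | ⟨c, j, hj3, rfl⟩ | ⟨b, rfl⟩
    · exact ⟨Sum.inl (), rfl⟩
    · exact ⟨Sum.inr (Sum.inl c₀), rfl⟩
    · refine ⟨Sum.inr (Sum.inr (Sum.inl (c, ⟨(j : ℕ), by omega⟩))), ?_⟩
      simp only [OddF]
      have he : Fin.castLE (Nat.sub_le s 2) (⟨(j : ℕ), by omega⟩ : Fin (s - 2)) = j :=
        Fin.ext rfl
      rw [he]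
    · exact ⟨Sum.inr (Sum.inr (Sum.inr b)), rfl⟩
  · rintro ⟨i, rfl⟩
    rcases i with _ | (c | (⟨c, j⟩ | b))
    · exact max_AllLeaves k hp₁ hp₂ (by omega) (by omega) (by omega)
    · exact max_SpecialD k (s - 2) c (by omega) (by omega)
    · refine max_sing_leg k c _ ?_
      have := j.isLt
      simp only [Fin.coe_castLE]
      omega
    · exact max_sing_center k b (by omega)

lemma odd_count (k : ℕ) (hp₁ : 1 ≤ p₁) (hp₂ : 1 ≤ p₂) (hs : 2 ≤ s) (hk : k = 2 * s - 1) :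
    mdi (btree p₁ p₂ s) k = (p₁ + p₂) * (s - 1) + 3 := by
  rw [mdi, odd_range k hp₁ hp₂ hs hk, ← Set.image_univ,
    Set.ncard_image_of_injective _ (oddF_inj hp₁ hp₂ hs), Set.ncard_univ,
    Nat.card_eq_fintype_card]
  simp only [Fintype.card_sum, Fintype.card_prod, Fintype.card_unit, Fintype.card_bool,
    Fintype.card_fin]
  have h2 : s - 1 = (s - 2) + 1 := by omega
  rw [h2, Nat.mul_add, Nat.mul_one]
  ring
end OCOUNT

lemma count_lower {V : Type*} [Fintype V] (G : SimpleGraph V) (k : ℕ)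
    {ι : Type*} [Fintype ι] (F : ι → Set V) (hinj : Function.Injective F)
    (hmax : ∀ i, MaxDkIndep G k (F i)) : Fintype.card ι ≤ mdi G k := by
  rw [mdi]
  have h1 : Fintype.card ι = (Set.range F).ncard := by
    rw [← Set.image_univ, Set.ncard_image_of_injective _ hinj, Set.ncard_univ,
      Nat.card_eq_fintype_card]
  rw [h1]
  exact Set.ncard_le_ncard (by rintro _ ⟨i, rfl⟩; exact hmax i) (Set.toFinite _)

section ECOUNT
variable {p₁ p₂ s : ℕ}

lemma Cb_some₁ (hs : 2 ≤ s) {o₁ o₁' : Option (Fin p₁)} {o₂ o₂' : Option (Fin p₂)}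
    (h : Cb p₁ p₂ s o₁ o₂ = Cb p₁ p₂ s o₁' o₂') (i : Fin p₁) (ho : o₁ = some i) :
    o₁' = some i := by
  subst ho
  have he : (Sum.inr (Sum.inl i, ⟨s - 2, by omega⟩) : Bool ⊕ ((Fin p₁ ⊕ Fin p₂) × Fin s)) ∈
      Cb p₁ p₂ s (some i) o₂ :=
    Or.inl (mem_SideSet₁.mpr ⟨i, _, rfl, Or.inl ⟨rfl, rfl⟩⟩)
  rw [h] at he
  rcases he with h1 | h1
  · obtain ⟨i₂, j₂, heq, hspec⟩ := mem_SideSet₁.mp h1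
    obtain ⟨rfl, he2⟩ : i = i₂ ∧ (⟨s - 2, by omega⟩ : Fin s) = j₂ := by simpa using heq
    rcases hspec with ⟨ho', _⟩ | ⟨_, hj⟩
    · exact ho'
    · exfalso
      have := congrArg Fin.val he2
      simp at this
      omega
  · exfalso
    obtain ⟨i₂, j₂, heq, _⟩ := mem_SideSet₂.mp h1
    simp at heq
lemma Cb_some₂ (hs : 2 ≤ s) {o₁ o₁' : Option (Fin p₁)} {o₂ o₂' : Option (Fin p₂)}
    (h : Cb p₁ p₂ s o₁ o₂ = Cb p₁ p₂ s o₁' o₂') (i : Fin p₂) (ho : o₂ = some i) :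
    o₂' = some i := by
  subst ho
  have he : (Sum.inr (Sum.inr i, ⟨s - 2, by omega⟩) : Bool ⊕ ((Fin p₁ ⊕ Fin p₂) × Fin s)) ∈
      Cb p₁ p₂ s o₁ (some i) :=
    Or.inr (mem_SideSet₂.mpr ⟨i, _, rfl, Or.inl ⟨rfl, rfl⟩⟩)
  rw [h] at he
  rcases he with h1 | h1
  · exfalso
    obtain ⟨i₂, j₂, heq, _⟩ := mem_SideSet₁.mp h1
    simp at heq
  · obtain ⟨i₂, j₂, heq, hspec⟩ := mem_SideSet₂.mp h1
    obtain ⟨rfl, he2⟩ : i = i₂ ∧ (⟨s - 2, by omega⟩ : Fin s) = j₂ := by simpa using heq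
    rcases hspec with ⟨ho', _⟩ | ⟨_, hj⟩
    · exact ho'
    · exfalso
      have := congrArg Fin.val he2
      simp at this
      omega

lemma Cb_inj (hs : 2 ≤ s) {o₁ o₁' : Option (Fin p₁)} {o₂ o₂' : Option (Fin p₂)}
    (h : Cb p₁ p₂ s o₁ o₂ = Cb p₁ p₂ s o₁' o₂') : o₁ = o₁' ∧ o₂ = o₂' := by
  constructor
  · rcases ho : o₁ with _ | i
    · rcases ho' : o₁' with _ | i'
      · rfl
      · exact absurd ((Cb_some₁ hs h.symm i' ho').symm.trans ho) (by simp)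
    · exact (Cb_some₁ hs h i ho).symm
  · rcases ho : o₂ with _ | i
    · rcases ho' : o₂' with _ | i'
      · rfl
      · exact absurd ((Cb_some₂ hs h.symm i' ho').symm.trans ho) (by simp)
    · exact (Cb_some₂ hs h i ho).symm

/-- no center vertex belongs to `Cb`. -/
lemma inl_not_mem_Cb (b : Bool) (o₁ : Option (Fin p₁)) (o₂ : Option (Fin p₂)) :
    (Sum.inl b : Bool ⊕ ((Fin p₁ ⊕ Fin p₂) × Fin s)) ∉ Cb p₁ p₂ s o₁ o₂ := by
  rintro (h | h)
  · obtain ⟨_, _, heq, _⟩ := mem_SideSet₁.mp h; simp at heq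
  · obtain ⟨_, _, heq, _⟩ := mem_SideSet₂.mp h; simp at heq

/-- members of `Cb` have coordinate `s-2` or `s-1`. -/
lemma mem_Cb_coord {o₁ : Option (Fin p₁)} {o₂ : Option (Fin p₂)} {c : Fin p₁ ⊕ Fin p₂}
    {j : Fin s} (h : (Sum.inr (c, j) : Bool ⊕ ((Fin p₁ ⊕ Fin p₂) × Fin s)) ∈
      Cb p₁ p₂ s o₁ o₂) : (j : ℕ) = s - 2 ∨ (j : ℕ) = s - 1 := by
  rcases h with h | h
  · obtain ⟨i₂, j₂, heq, hspec⟩ := mem_SideSet₁.mp h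
    obtain ⟨-, rfl⟩ : c = Sum.inl i₂ ∧ j = j₂ := by simpa using heq
    rcases hspec with ⟨_, hj⟩ | ⟨_, hj⟩ <;> omega
  · obtain ⟨i₂, j₂, heq, hspec⟩ := mem_SideSet₂.mp h
    obtain ⟨-, rfl⟩ : c = Sum.inr i₂ ∧ j = j₂ := by simpa using heq
    rcases hspec with ⟨_, hj⟩ | ⟨_, hj⟩ <;> omega

def EvenF (p₁ p₂ s : ℕ) :
    ((Option (Fin p₁) × Option (Fin p₂)) ⊕ (Fin p₁ ⊕ Fin p₂) ⊕
      ((Fin p₁ ⊕ Fin p₂) × Fin (s - 3)) ⊕ Bool) →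
    Set (Bool ⊕ ((Fin p₁ ⊕ Fin p₂) × Fin s))
  | Sum.inl (o₁, o₂) => Cb p₁ p₂ s o₁ o₂
  | Sum.inr (Sum.inl c) => SpecialD p₁ p₂ s (s - 3) c
  | Sum.inr (Sum.inr (Sum.inl (c, j))) => {Sum.inr (c, Fin.castLE (Nat.sub_le s 3) j)}
  | Sum.inr (Sum.inr (Sum.inr b)) => {Sum.inl b}

lemma evenF_inj (hs : 3 ≤ s) : Function.Injective (EvenF p₁ p₂ s) := by
  have hsl : s - 3 < s := by omega
  have hmemA : ∀ (c : Fin p₁ ⊕ Fin p₂),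
      (Sum.inr (c, ⟨s - 3, hsl⟩) : Bool ⊕ ((Fin p₁ ⊕ Fin p₂) × Fin s)) ∈
        SpecialD p₁ p₂ s (s - 3) c := fun c => Or.inl ⟨_, rfl, rfl⟩
  intro a b h
  rcases a with ⟨o₁, o₂⟩ | (c | (⟨c, j⟩ | bb)) <;>
    rcases b with ⟨o₁', o₂'⟩ | (c' | (⟨c', j'⟩ | bb')) <;>
    simp only [EvenF] at h
  · obtain ⟨h1, h2⟩ := Cb_inj (by omega) h
    rw [h1, h2]
  · exfalso
    have h1 : _ ∈ Cb p₁ p₂ s o₁ o₂ := h.symm ▸ hmemA c'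
    rcases mem_Cb_coord h1 with h2 | h2 <;> simp only [Fin.val_mk] at h2 <;> omega
  · exfalso
    have h1 : _ ∈ Cb p₁ p₂ s o₁ o₂ := h.symm ▸ Set.mem_singleton _
    have := j'.isLt
    rcases mem_Cb_coord h1 with h2 | h2 <;> simp [Fin.coe_castLE] at h2 <;> omega
  · exact absurd (h.symm ▸ Set.mem_singleton _) (inl_not_mem_Cb bb' o₁ o₂)
  · exfalso
    have h1 : _ ∈ Cb p₁ p₂ s o₁' o₂' := h ▸ hmemA c
    rcases mem_Cb_coord h1 with h2 | h2 <;> simp only [Fin.val_mk] at h2 <;> omega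
  · have := h ▸ hmemA c
    rcases this with ⟨j₂, he, hj₂⟩ | ⟨c₂, j₂, he, hj₂, -⟩
    · obtain ⟨rfl, -⟩ : c = c' ∧ (⟨s - 3, hsl⟩ : Fin s) = j₂ := by simpa using he
      rfl
    · exfalso
      obtain ⟨-, he2⟩ : c₂ = c ∧ j₂ = (⟨s - 3, hsl⟩ : Fin s) := by simpa using he.symm
      rw [he2] at hj₂
      simp at hj₂; omega
  · exfalso
    have h1 := h ▸ hmemA c
    rw [Set.mem_singleton_iff] at h1
    obtain ⟨-, he2⟩ : c = c' ∧ (⟨s - 3, hsl⟩ : Fin s) = Fin.castLE (Nat.sub_le s 3) j' := by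
      simpa using h1
    have := j'.isLt
    have : (s : ℕ) - 3 = (j' : ℕ) := by
      have := congrArg Fin.val he2; simpa using this
    omega
  · exfalso
    have h1 := h ▸ hmemA c
    rw [Set.mem_singleton_iff] at h1
    simp at h1
  · exfalso
    have h1 : _ ∈ Cb p₁ p₂ s o₁' o₂' := h ▸ Set.mem_singleton _
    have := j.isLt
    rcases mem_Cb_coord h1 with h2 | h2 <;> simp [Fin.coe_castLE] at h2 <;> omega
  · exfalso
    have h1 := h.symm ▸ hmemA c'
    rw [Set.mem_singleton_iff] at h1
    obtain ⟨-, he2⟩ : c' = c ∧ (⟨s - 3, hsl⟩ : Fin s) = Fin.castLE (Nat.sub_le s 3) j := by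
      simpa using h1
    have := j.isLt
    have : (s : ℕ) - 3 = (j : ℕ) := by
      have := congrArg Fin.val he2; simpa using this
    omega
  · have h1 : (Sum.inr (c, Fin.castLE (Nat.sub_le s 3) j) :
        Bool ⊕ ((Fin p₁ ⊕ Fin p₂) × Fin s)) = Sum.inr (c', Fin.castLE (Nat.sub_le s 3) j') :=
      Set.singleton_eq_singleton_iff.mp h
    obtain ⟨rfl, he2⟩ : c = c' ∧ Fin.castLE (Nat.sub_le s 3) j = Fin.castLE (Nat.sub_le s 3) j' := by
      simpa using h1
    obtain rfl : j = j' := by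
      have := congrArg Fin.val he2
      exact Fin.ext (by simpa using this)
    rfl
  · exact absurd (Set.singleton_eq_singleton_iff.mp h) (by simp)
  · exact absurd (h ▸ Set.mem_singleton _) (inl_not_mem_Cb bb o₁' o₂')
  · exfalso
    have h1 := h.symm ▸ hmemA c'
    rw [Set.mem_singleton_iff] at h1
    simp at h1
  · exact absurd (Set.singleton_eq_singleton_iff.mp h) (by simp)
  · obtain rfl : bb = bb' := by simpa using Set.singleton_eq_singleton_iff.mp h
    rfl

lemma even_lower (k : ℕ) (hp₁ : 1 ≤ p₁) (hp₂ : 1 ≤ p₂) (hs : 3 ≤ s) (hk : k = 2 * s - 2) :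
    (p₁ + 1) * (p₂ + 1) + (p₁ + p₂) + (p₁ + p₂) * (s - 3) + 2 ≤ mdi (btree p₁ p₂ s) k := by
  have h := count_lower (btree p₁ p₂ s) k (EvenF p₁ p₂ s) (evenF_inj hs) ?_
  · calc (p₁ + 1) * (p₂ + 1) + (p₁ + p₂) + (p₁ + p₂) * (s - 3) + 2
        = Fintype.card ((Option (Fin p₁) × Option (Fin p₂)) ⊕ (Fin p₁ ⊕ Fin p₂) ⊕
          ((Fin p₁ ⊕ Fin p₂) × Fin (s - 3)) ⊕ Bool) := by
          simp only [Fintype.card_sum, Fintype.card_prod, Fintype.card_option,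
            Fintype.card_bool, Fintype.card_fin]
          ring
      _ ≤ _ := h
  · rintro (⟨o₁, o₂⟩ | (c | (⟨c, j⟩ | b)))
    · exact max_Cb k o₁ o₂ hp₁ hp₂ (by omega) (by omega)
    · exact max_SpecialD k (s - 3) c (by omega) (by omega)
    · refine max_sing_leg k c _ ?_
      have := j.isLt
      simp only [Fin.coe_castLE]
      omega
    · exact max_sing_center k b (by omega)

def Even2F (p₁ p₂ s : ℕ) : ((Option (Fin p₁) × Option (Fin p₂)) ⊕ Unit) →
    Set (Bool ⊕ ((Fin p₁ ⊕ Fin p₂) × Fin s))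
  | Sum.inl (o₁, o₂) => Cb p₁ p₂ s o₁ o₂
  | Sum.inr _ => CenterSet p₁ p₂ s false

lemma even2F_inj (hs : 2 ≤ s) : Function.Injective (Even2F p₁ p₂ s) := by
  intro a b h
  rcases a with ⟨o₁, o₂⟩ | _ <;> rcases b with ⟨o₁', o₂'⟩ | _ <;> simp only [Even2F] at h
  · obtain ⟨h1, h2⟩ := Cb_inj hs h
    rw [h1, h2]
  · exfalso
    have hmem : (Sum.inl false : Bool ⊕ ((Fin p₁ ⊕ Fin p₂) × Fin s)) ∈
        CenterSet p₁ p₂ s false := Or.inl rfl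
    rw [← h] at hmem
    exact inl_not_mem_Cb false o₁ o₂ hmem
  · exfalso
    have hmem : (Sum.inl false : Bool ⊕ ((Fin p₁ ⊕ Fin p₂) × Fin s)) ∈
        CenterSet p₁ p₂ s false := Or.inl rfl
    rw [h] at hmem
    exact inl_not_mem_Cb false o₁' o₂' hmem
  · rfl

lemma even2_lower (k : ℕ) (hp₁ : 1 ≤ p₁) (hp₂ : 1 ≤ p₂) (hs : s = 2) (hk : k = 2) :
    (p₁ + 1) * (p₂ + 1) + 1 ≤ mdi (btree p₁ p₂ s) k := by
  have h := count_lower (btree p₁ p₂ s) k (Even2F p₁ p₂ s) (even2F_inj (by omega)) ?_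
  · calc (p₁ + 1) * (p₂ + 1) + 1
        = Fintype.card ((Option (Fin p₁) × Option (Fin p₂)) ⊕ Unit) := by
          simp [Fintype.card_sum, Fintype.card_prod, Fintype.card_option]
      _ ≤ _ := h
  · rintro (⟨o₁, o₂⟩ | _)
    · exact max_Cb k o₁ o₂ hp₁ hp₂ (by omega) (by omega)
    · exact max_CenterSet k false (by omega) (by omega)

end ECOUNT


/-- For `k ≥ 2`, `p₁, p₂ ≥ 1` with `p₁ + p₂ = p`,
`mdi_k(B_{p₁,p₂,⌊k/2⌋+1}) ≥ f_k(p(⌊k/2⌋+1)+2)` with equality iff `k` is odd. -/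
theorem stmt_2 (k p₁ p₂ p : ℕ) (hk : 2 ≤ k) (h₁ : 1 ≤ p₁) (h₂ : 1 ≤ p₂)
    (hp : p₁ + p₂ = p) :
    fk k (p * (k / 2 + 1) + 2) ≤ mdi (btree p₁ p₂ (k / 2 + 1)) k ∧
    (mdi (btree p₁ p₂ (k / 2 + 1)) k = fk k (p * (k / 2 + 1) + 2) ↔ Odd k) := by
  subst hp
  generalize hgen : k / 2 + 1 = s
  have hp2 : 2 ≤ p₁ + p₂ := by omega
  have hs2 : 2 ≤ s := by omega
  have hngt : ¬ ((p₁ + p₂) * s + 2 ≤ k + 1) := by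
    have h2s : 2 * s ≤ (p₁ + p₂) * s := Nat.mul_le_mul_right s hp2
    omega
  rcases Nat.even_or_odd k with hek | hok
  · -- even case
    have hm : k % 2 = 0 := Nat.even_iff.mp hek
    have hks : k = 2 * s - 2 := by omega
    have hnotodd : ¬ Odd k := by simp [Nat.odd_iff, hm]
    have hlow : fk k ((p₁ + p₂) * s + 2) + 1 ≤ mdi (btree p₁ p₂ s) k := by
      by_cases hs3 : 3 ≤ s
      · have hL := even_lower k h₁ h₂ hs3 hks
        have hdiv : ((p₁ + p₂) * s + 2 - k % 2) / s = p₁ + p₂ := by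
          rw [hm, Nat.sub_zero, Nat.mul_comm, Nat.mul_add_div (by omega),
            Nat.div_eq_of_lt (by omega), Nat.add_zero]
        have hfk : fk k ((p₁ + p₂) * s + 2) = (p₁ + p₂) * s + 2 - (p₁ + p₂) + 1 := by
          rw [fk, if_neg hngt, hgen, hdiv]
        rw [hfk]
        have e1 : (p₁ + 1) * (p₂ + 1) = p₁ * p₂ + p₁ + p₂ + 1 := by ring
        rw [e1] at hL
        have e2 : (p₁ + p₂) * s = (p₁ + p₂) * (s - 3) + (p₁ + p₂) * 3 := by
          rw [← Nat.mul_add]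
          congr 1
          omega
        have e3 : 1 ≤ p₁ * p₂ := by
          have := Nat.mul_le_mul h₁ h₂
          simpa using this
        generalize hM : mdi (btree p₁ p₂ s) k = M at hL ⊢
        generalize hC : (p₁ + p₂) * s = C at e2 ⊢
        generalize hB : (p₁ + p₂) * (s - 3) = B at e2 hL ⊢
        generalize hA : p₁ * p₂ = A at e3 hL ⊢
        omega
      · have hseq : s = 2 := by omega
        have hk2 : k = 2 := by omega
        have hL := even2_lower k h₁ h₂ hseq hk2
        subst hseq hk2
        have hfk : fk 2 ((p₁ + p₂) * 2 + 2) = (p₁ + p₂) + 2 := by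
          rw [fk, if_neg hngt]
          omega
        rw [hfk]
        have e1 : (p₁ + 1) * (p₂ + 1) = p₁ * p₂ + p₁ + p₂ + 1 := by ring
        rw [e1] at hL
        have e3 : 1 ≤ p₁ * p₂ := by
          have := Nat.mul_le_mul h₁ h₂
          simpa using this
        generalize hM : mdi (btree p₁ p₂ 2) 2 = M at hL ⊢
        generalize hA : p₁ * p₂ = A at e3 hL ⊢
        omega
    exact ⟨by omega, ⟨fun h => absurd (by omega : False) (fun x => x),
      fun h => absurd h hnotodd⟩⟩
  · -- odd case
    have hm : k % 2 = 1 := Nat.odd_iff.mp hok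
    have hks : k = 2 * s - 1 := by omega
    have hC := odd_count k h₁ h₂ hs2 hks
    have hdiv : ((p₁ + p₂) * s + 2 - k % 2) / s = p₁ + p₂ := by
      rw [hm]
      have e : (p₁ + p₂) * s + 2 - 1 = s * (p₁ + p₂) + 1 := by
        rw [Nat.mul_comm]; omega
      rw [e, Nat.mul_add_div (by omega), Nat.div_eq_of_lt (by omega), Nat.add_zero]
    have hfk : fk k ((p₁ + p₂) * s + 2) = (p₁ + p₂) * s + 2 - (p₁ + p₂) + 1 := by
      rw [fk, if_neg hngt, hgen, hdiv]
    have heq : mdi (btree p₁ p₂ s) k = fk k ((p₁ + p₂) * s + 2) := by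
      rw [hC, hfk]
      have e2 : (p₁ + p₂) * s = (p₁ + p₂) * (s - 1) + (p₁ + p₂) * 1 := by
        rw [← Nat.mul_add]
        congr 1
        omega
      generalize hC2 : (p₁ + p₂) * s = C at e2 ⊢
      generalize hB : (p₁ + p₂) * (s - 1) = B at e2 ⊢
      omega
    exact ⟨le_of_eq heq.symm, ⟨fun _ => hok, fun _ => heq⟩⟩
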